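/- Define the 4-linear form dT^t(X₀,X₁,X₂,X₃) := Σ_{i=0}^{3} (−1)^i (∇^t_{X_i} T^t)(X₀,…,X̂_i,…,X₃) − Σ_{0≤i<j≤3} (−1)^{i+j} T^t(T^t(X_i,X_j), X₀,…,X̂_i,…,X̂_j,…,X₃), where T^t(X,Y,Z) := ⟨T^t(X,Y),Z⟩ and (∇^t_W T^t)(X,Y,V) := ⟨Λ^t(W)(T^t(X,Y)) − T^t(Λ^t(W)X,Y) − T^t(X,Λ^t(W)Y), V⟩. If ⟨·,·⟩ is naturally reductive (⟨[X,Y]_𝔪,Z⟩ + ⟨Y,[X,Z]_𝔪⟩ = 0 for all X,Y,Z ∈ 𝔪), then dT^t(X,Y,Z,V) = 2(2t−1)·⟨Jac_𝔪(X,Y,Z), V⟩ for all X,Y,Z,V ∈ 𝔪. -/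
import Mathlib


/-- The torsion `T^t(X,Y) = (2t−1)[X,Y]_𝔪` of the connection `Λ^t(X)Y = t[X,Y]_𝔪`. -/
noncomputable def torTt {𝔤 : Type*} [LieRing 𝔤] [LieAlgebra ℝ 𝔤]
    (p𝔪 : 𝔤 →ₗ[ℝ] 𝔤) (t : ℝ) (x y : 𝔤) : 𝔤 :=
  (2 * t - 1) • p𝔪 ⁅x, y⁆

/-- The algebraic covariant derivative
`(∇^t_W T^t)(X,Y) = Λ^t(W)(T^t(X,Y)) − T^t(Λ^t(W)X,Y) − T^t(X,Λ^t(W)Y)`. -/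
noncomputable def nablaTt {𝔤 : Type*} [LieRing 𝔤] [LieAlgebra ℝ 𝔤]
    (p𝔪 : 𝔤 →ₗ[ℝ] 𝔤) (t : ℝ) (w x y : 𝔤) : 𝔤 :=
  t • p𝔪 ⁅w, torTt p𝔪 t x y⁆ - torTt p𝔪 t (t • p𝔪 ⁅w, x⁆) y
    - torTt p𝔪 t x (t • p𝔪 ⁅w, y⁆)

/-- `Jac_𝔪(X,Y,Z) = [X,[Y,Z]_𝔪]_𝔪 + [Y,[Z,X]_𝔪]_𝔪 + [Z,[X,Y]_𝔪]_𝔪`. -/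
noncomputable def jacM {𝔤 : Type*} [LieRing 𝔤] [LieAlgebra ℝ 𝔤]
    (p𝔪 : 𝔤 →ₗ[ℝ] 𝔤) (x y z : 𝔤) : 𝔤 :=
  p𝔪 ⁅x, p𝔪 ⁅y, z⁆⁆ + p𝔪 ⁅y, p𝔪 ⁅z, x⁆⁆ + p𝔪 ⁅z, p𝔪 ⁅x, y⁆⁆

/-- The exterior derivative of the torsion 3-form, computed in terms of the connection
`∇^t` with torsion, evaluated on `(X₀,X₁,X₂,X₃)`:
`dT(X₀,…,X₃) = Σᵢ (−1)ⁱ (∇_{Xᵢ}T)(…,X̂ᵢ,…) − Σ_{i<j} (−1)^{i+j} T(T(Xᵢ,Xⱼ),…,X̂ᵢ,…,X̂ⱼ,…)`. -/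
noncomputable def dTt {𝔤 : Type*} [LieRing 𝔤] [LieAlgebra ℝ 𝔤]
    (p𝔪 : 𝔤 →ₗ[ℝ] 𝔤) (B : LinearMap.BilinForm ℝ 𝔤) (t : ℝ) (x₀ x₁ x₂ x₃ : 𝔤) : ℝ :=
  B (nablaTt p𝔪 t x₀ x₁ x₂) x₃ - B (nablaTt p𝔪 t x₁ x₀ x₂) x₃
    + B (nablaTt p𝔪 t x₂ x₀ x₁) x₃ - B (nablaTt p𝔪 t x₃ x₀ x₁) x₂
    + B (torTt p𝔪 t (torTt p𝔪 t x₀ x₁) x₂) x₃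
    - B (torTt p𝔪 t (torTt p𝔪 t x₀ x₂) x₁) x₃
    + B (torTt p𝔪 t (torTt p𝔪 t x₀ x₃) x₁) x₂
    + B (torTt p𝔪 t (torTt p𝔪 t x₁ x₂) x₀) x₃
    - B (torTt p𝔪 t (torTt p𝔪 t x₁ x₃) x₀) x₂
    + B (torTt p𝔪 t (torTt p𝔪 t x₂ x₃) x₀) x₁

/-- On a naturally reductive space,
`dT^t(X,Y,Z,V) = 2(2t−1)·⟨Jac_𝔪(X,Y,Z), V⟩` for all `X,Y,Z,V ∈ 𝔪`. -/
theorem stmt6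
    {𝔤 : Type*} [LieRing 𝔤] [LieAlgebra ℝ 𝔤] [FiniteDimensional ℝ 𝔤]
    (𝔥 𝔪 : Submodule ℝ 𝔤)
    (p𝔥 p𝔪 : 𝔤 →ₗ[ℝ] 𝔤)
    (hsum : ∀ x, p𝔥 x + p𝔪 x = x)
    (hmem𝔥 : ∀ x, p𝔥 x ∈ 𝔥) (hmem𝔪 : ∀ x, p𝔪 x ∈ 𝔪)
    (hid𝔥 : ∀ x ∈ 𝔥, p𝔥 x = x) (hid𝔪 : ∀ x ∈ 𝔪, p𝔪 x = x)
    (hsub : ∀ x ∈ 𝔥, ∀ y ∈ 𝔥, ⁅x, y⁆ ∈ 𝔥)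
    (hhm : ∀ x ∈ 𝔥, ∀ y ∈ 𝔪, ⁅x, y⁆ ∈ 𝔪)
    (B : LinearMap.BilinForm ℝ 𝔤)
    (hBsymm : ∀ x ∈ 𝔪, ∀ y ∈ 𝔪, B x y = B y x)
    (hBpos : ∀ x ∈ 𝔪, x ≠ 0 → 0 < B x x)
    (hnat : ∀ x ∈ 𝔪, ∀ y ∈ 𝔪, ∀ z ∈ 𝔪, B (p𝔪 ⁅x, y⁆) z + B y (p𝔪 ⁅x, z⁆) = 0)
    (t : ℝ) :
    ∀ x ∈ 𝔪, ∀ y ∈ 𝔪, ∀ z ∈ 𝔪, ∀ v ∈ 𝔪,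
      dTt p𝔪 B t x y z v = (2 * (2 * t - 1)) * B (jacM p𝔪 x y z) v := by
  intro x hx y hy z hz v hv
  have flip : ∀ a b c d : 𝔤,
      B (p𝔪 ⁅p𝔪 ⁅a, b⁆, c⁆) d = -(B (p𝔪 ⁅c, p𝔪 ⁅a, b⁆⁆) d) := by
    intro a b c d
    rw [← lie_skew, map_neg, map_neg, LinearMap.neg_apply]
  have R1 : ∀ a b c d : 𝔤,
      B (p𝔪 ⁅a, p𝔪 ⁅b, c⁆⁆) d = -(B (p𝔪 ⁅a, p𝔪 ⁅c, b⁆⁆) d) := by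
    intro a b c d
    rw [show p𝔪 ⁅b, c⁆ = -p𝔪 ⁅c, b⁆ by rw [← lie_skew, map_neg], lie_neg, map_neg,
      map_neg, LinearMap.neg_apply]
  have R2 : ∀ a ∈ 𝔪, ∀ b ∈ 𝔪, ∀ c ∈ 𝔪, ∀ d ∈ 𝔪,
      B (p𝔪 ⁅a, p𝔪 ⁅b, c⁆⁆) d = B (p𝔪 ⁅b, p𝔪 ⁅a, d⁆⁆) c := by
    intro a ha b hb c hc d hd
    have h1 := hnat a ha (p𝔪 ⁅b, c⁆) (hmem𝔪 _) d hd
    have h2 := hnat b hb c hc (p𝔪 ⁅a, d⁆) (hmem𝔪 _)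
    have h3 := hBsymm c hc (p𝔪 ⁅b, p𝔪 ⁅a, d⁆⁆) (hmem𝔪 _)
    linarith
  simp only [dTt, nablaTt, torTt, jacM, lie_smul, smul_lie, map_smul, map_sub, map_add,
    LinearMap.smul_apply, LinearMap.sub_apply, LinearMap.add_apply, smul_eq_mul,
    LinearMap.map_smul]
  linear_combination
    ((2*t-1)*(t-1)) * flip x y z v
    + (-(2*t-1)^2) * flip x z y v
    + ((2*t-1)^2) * flip x v y z
    + (t*(2*t-1)) * flip y x z v
    + ((2*t-1)^2) * flip y z x v
    + (-(2*t-1)^2) * flip y v x z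
    + (-(t*(2*t-1))) * flip z x y v
    + ((2*t-1)^2) * flip z v x y
    + (t*(2*t-1)) * flip v x y z
    + (-(t*(2*t-1))) * R1 x y z v
    + (t*(2*t-1)) * R1 x y v z
    + (-(t*(2*t-1))) * R1 x z v y
    + ((2*t-1)*(t-2)) * R1 y x z v
    + (-(t*(2*t-1))) * R1 y x v z
    + (-(t*(2*t-1))) * R1 z x y v
    + ((2*t-1)*(t-1)) * R2 x hx y hy z hz v hv
    + ((2*t-1)*(t-1)) * R2 x hx y hy v hv z hz
    + (-((2*t-1)*(t-1))) * R2 x hx z hz v hv y hy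
    + (t*(2*t-1)) * R2 x hx v hv z hz y hy
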